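/- Let m > n be relatively prime positive integers, with m even, and suppose m is not twice a perfect cube. Set r = n·(m−n) and s = m·(m+n). Then there is no rational number x satisfying s·(x² − r²) = 2·x³. -/

import Mathlib

theorem no_two_torsion_even (m n : ℕ) (hmn : n < m) (hn : 0 < n)
    (hcop : Nat.Coprime m n) (hme : Even m)
    (hcube : ¬ ∃ k : ℕ, m = 2 * k ^ 3) :
    ¬ ∃ x : ℚ, (m * (m + n) : ℚ) * (x ^ 2 - (n * (m - n) : ℕ) ^ 2) = 2 * x ^ 3 := by
  rintro ⟨x, hx⟩
  have hnm : n ≤ m := hmn.le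
  set R : ℕ := n * (m - n) with hR
  -- parity facts
  have hnodd : Odd n := by
    rcases Nat.even_or_odd n with he | ho
    · exfalso
      have : 2 ∣ Nat.gcd m n := Nat.dvd_gcd hme.two_dvd he.two_dvd
      rw [hcop] at this; omega
    · exact ho
  have hRodd : Odd R := hnodd.mul (Nat.Even.sub_odd hnm hme hnodd)
  have hmnodd : Odd (m + n) := hme.add_odd hnodd
  have hRpos : 0 < R := Nat.mul_pos hn (by omega)
  have hmpos : 0 < m := by omega
  -- the integer equation
  have hden : (x.den : ℚ) ≠ 0 := Nat.cast_ne_zero.mpr x.den_nz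
  have hnum : (x.num : ℚ) = x * x.den := (div_eq_iff hden).mp (Rat.num_div_den x)
  have key : ((m : ℤ) * (m + n)) * (x.num ^ 2 * x.den - (R : ℤ) ^ 2 * (x.den : ℤ) ^ 3)
      = 2 * x.num ^ 3 := by
    have : ((m : ℚ) * (m + n)) * ((x.num : ℚ) ^ 2 * x.den - (R : ℚ) ^ 2 * (x.den : ℚ) ^ 3)
        = 2 * (x.num : ℚ) ^ 3 := by
      rw [hnum]
      calc ((m : ℚ) * (m + n)) * ((x * x.den) ^ 2 * x.den - (R : ℚ) ^ 2 * (x.den : ℚ) ^ 3)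
          = ((m : ℚ) * (m + n)) * (x ^ 2 - (R : ℚ) ^ 2) * (x.den : ℚ) ^ 3 := by ring
        _ = 2 * x ^ 3 * (x.den : ℚ) ^ 3 := by rw [hx]
        _ = 2 * (x * x.den) ^ 3 := by ring
    exact_mod_cast this
  -- denominator divides 2
  have hdvd : (x.den : ℤ) ∣ 2 * x.num ^ 3 :=
    ⟨(m : ℤ) * (m + n) * (x.num ^ 2 - (R : ℤ) ^ 2 * (x.den : ℤ) ^ 2), by linear_combination -key⟩
  have hden2 : x.den = 1 ∨ x.den = 2 := by
    have h1 : x.den ∣ 2 * x.num.natAbs ^ 3 := by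
      have := Int.natAbs_dvd_natAbs.mpr hdvd
      simpa [Int.natAbs_mul, Int.natAbs_pow] using this
    have h2 : x.den ∣ 2 := (Nat.Coprime.dvd_of_dvd_mul_right
      (Nat.Coprime.pow_right _ x.reduced.symm) h1)
    exact (Nat.dvd_prime Nat.prime_two).mp h2
  set p : ℤ := x.num with hp
  rcases hden2 with hd1 | hd2
  · -- denominator 1
    rw [hd1] at key
    push_cast at key
    -- key : (m*(m+n)) * (p^2 - R^2) = 2*p^3  (after simp)
    have key1 : ((m : ℤ) * (m + n)) * (p ^ 2 - (R : ℤ) ^ 2) = 2 * p ^ 3 := by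
      linear_combination key
    rcases Int.even_or_odd p with hpe | hpo
    · -- p even : main case
      obtain ⟨u, hu⟩ := hpe
      have hp2u : p = 2 * u := by omega
      have hune : u ≠ 0 := by
        rintro rfl
        rw [hp2u] at key1
        have hpos : (0:ℤ) < (m : ℤ) * (m + n) * (R : ℤ) ^ 2 := by positivity
        push_cast at key1
        nlinarith [key1]
      obtain ⟨M, hM⟩ := hme
      have hMpos : 0 < M := by omega
      have hm2M : (m : ℤ) = 2 * M := by push_cast; omega
      rw [hp2u] at key1
      have key2 : (M : ℤ) * (((m : ℤ) + n) * (4 * u ^ 2 - (R : ℤ) ^ 2)) = (2 * u) ^ 3 := by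
        have h2 : 2 * ((M : ℤ) * (((m : ℤ) + n) * (4 * u ^ 2 - (R : ℤ) ^ 2)))
            = 2 * (2 * u) ^ 3 := by
          linear_combination key1 - (((m:ℤ)+n) * (4 * u ^ 2 - (R:ℤ)^2)) * hm2M
        exact mul_left_cancel₀ two_ne_zero h2
      set T : ℕ := (4 * u ^ 2 - (R : ℤ) ^ 2).natAbs with hT
      have hTodd : Odd T := by
        rw [hT, Int.natAbs_odd]
        obtain ⟨b, hb⟩ := hRodd
        have hRb : (R : ℤ) = 2 * b + 1 := by exact_mod_cast hb
        exact ⟨2 * u ^ 2 - 2 * b ^ 2 - 2 * b - 1, by rw [hRb]; ring⟩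
      have hIntEq : (m : ℤ) * (((m + n : ℕ) : ℤ) * (4 * u ^ 2 - (R : ℤ) ^ 2))
          = 16 * u ^ 3 := by push_cast; linear_combination key1
      have hnatEq : m * ((m + n) * T) = 16 * u.natAbs ^ 3 := by
        have h := congrArg Int.natAbs hIntEq
        have hab : ((m : ℤ) + n).natAbs = m + n := by omega
        simpa [Int.natAbs_mul, Int.natAbs_pow, hab] using h
      have hcopMT : Nat.Coprime M ((m + n) * T) := by
        by_contra hco
        set L : ℕ := (Nat.gcd M ((m + n) * T)).minFac with hL
        have hℓ : L.Prime := Nat.minFac_prime hco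
        have hℓM : L ∣ M := (Nat.minFac_dvd _).trans (Nat.gcd_dvd_left _ _)
        have hℓmnT : L ∣ (m + n) * T := (Nat.minFac_dvd _).trans (Nat.gcd_dvd_right _ _)
        have hL2 : L ≠ 2 := by
          intro h2
          have hoddprod : Odd ((m + n) * T) := hmnodd.mul hTodd
          obtain ⟨k, hk⟩ := hoddprod
          obtain ⟨t, ht⟩ := hℓmnT
          rw [h2] at ht
          omega
        have hℓm : L ∣ m := hℓM.trans ⟨2, by omega⟩
        have hℓn : ¬ L ∣ n := by
          intro h
          have : L ∣ Nat.gcd m n := Nat.dvd_gcd hℓm h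
          rw [hcop] at this
          exact Nat.Prime.one_lt hℓ |>.ne' (Nat.dvd_one.mp this)
        rcases (Nat.Prime.dvd_mul hℓ).mp hℓmnT with hmn' | hTd
        · exact hℓn (by
            have : L ∣ (m + n) - m := Nat.dvd_sub hmn' hℓm
            simpa using this)
        · have hℓ16 : L ∣ 16 * u.natAbs ^ 3 := by
            have h := hℓm.mul_right ((m + n) * T)
            rwa [hnatEq] at h
          have hℓu : L ∣ u.natAbs := by
            rcases (Nat.Prime.dvd_mul hℓ).mp hℓ16 with h16 | hupow
            · exfalso
              have : L ∣ 2 := hℓ.dvd_of_dvd_pow (show L ∣ 2 ^ 4 by norm_num [h16] )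
              exact hL2 ((Nat.prime_dvd_prime_iff_eq hℓ Nat.prime_two).mp this)
            · exact hℓ.dvd_of_dvd_pow hupow
          have hℓuZ : (L : ℤ) ∣ u := Int.natAbs_dvd_natAbs.mp (by simpa using hℓu)
          have hℓTZ : (L : ℤ) ∣ 4 * u ^ 2 - (R : ℤ) ^ 2 :=
            Int.natAbs_dvd_natAbs.mp (by simpa [← hT] using hTd)
          have hℓR2 : (L : ℤ) ∣ ((R : ℤ)) ^ 2 := by
            have h1 : (L : ℤ) ∣ 4 * u ^ 2 := ((dvd_pow hℓuZ two_ne_zero).mul_left 4)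
            have h2 := dvd_sub h1 hℓTZ
            rwa [sub_sub_cancel] at h2
          have hℓR : L ∣ R := by
            have : L ∣ R ^ 2 := by exact_mod_cast Int.natCast_dvd_natCast.mp (by exact_mod_cast hℓR2)
            exact hℓ.dvd_of_dvd_pow this
          rcases (Nat.Prime.dvd_mul hℓ).mp (hR ▸ hℓR) with h | h
          · exact hℓn h
          · exact hℓn (by
              have : L ∣ m - (m - n) := Nat.dvd_sub hℓm h
              simpa [Nat.sub_sub_self hnm] using this)
      have hcopInt : IsCoprime (M : ℤ) (((m + n : ℕ) : ℤ) * (4 * u ^ 2 - (R : ℤ) ^ 2)) := by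
        rw [Int.isCoprime_iff_gcd_eq_one]
        have hab : ((m : ℤ) + n).natAbs = m + n := by omega
        simpa [Int.gcd, Int.natAbs_mul, ← hT, hab] using hcopMT
      have key2' : (M : ℤ) * (((m + n : ℕ) : ℤ) * (4 * u ^ 2 - (R : ℤ) ^ 2)) = (2 * u) ^ 3 := by
        push_cast
        push_cast at key2
        linear_combination key2
      obtain ⟨d, hd⟩ := Int.eq_pow_of_mul_eq_pow_odd_left hcopInt (by decide : Odd 3) key2'
      have hdpos : 0 < d := by
        have h1 : (0 : ℤ) < d ^ 3 := by
          rw [← hd]; exact_mod_cast hMpos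
        exact (Odd.pow_pos_iff (by decide : Odd 3)).mp h1
      refine hcube ⟨d.toNat, ?_⟩
      have hM3 : M = d.toNat ^ 3 := by
        have : (M : ℤ) = ((d.toNat : ℤ)) ^ 3 := by rw [hd, Int.toNat_of_nonneg hdpos.le]
        exact_mod_cast this
      omega
    · -- p odd
      obtain ⟨a, ha⟩ := hpo
      obtain ⟨b, hb⟩ := hRodd
      have hRb : (R : ℤ) = 2 * b + 1 := by exact_mod_cast hb
      have h8 : p ^ 2 - (R : ℤ) ^ 2 = 4 * (a * (a + 1) - b * (b + 1)) := by
        rw [ha, hRb]; ring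
      obtain ⟨c, hc⟩ : (2:ℤ) ∣ (a * (a + 1) - b * (b + 1)) := by
        have h1 := Int.even_mul_succ_self a
        have h2 := Int.even_mul_succ_self b
        obtain ⟨c1, hc1⟩ := h1; obtain ⟨c2, hc2⟩ := h2
        exact ⟨c1 - c2, by omega⟩
      obtain ⟨M, hM⟩ := hme
      have h16 : (16 : ℤ) ∣ 2 * p ^ 3 := by
        refine ⟨(M : ℤ) * ((m : ℤ) + n) * c, ?_⟩
        have hm2M : (m : ℤ) = 2 * M := by push_cast; omega
        rw [← key1, h8, hc, hm2M]; ring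
      have hpe : Even p := by
        obtain ⟨t, ht⟩ := h16
        have : p ^ 3 = 4 * t + 4 * t := by linarith
        exact (Int.even_pow.mp (⟨4 * t, this⟩ : Even (p ^ 3))).1
      obtain ⟨t, ht⟩ := hpe
      omega
  · -- denominator 2
    rw [hd2] at key
    have hpodd : Odd p := by
      have hcop2 : Nat.Coprime p.natAbs 2 := hd2 ▸ x.reduced
      rw [Int.not_even_iff_odd.symm]
      intro hpe
      obtain ⟨t, ht⟩ := hpe
      have h2p : 2 ∣ p.natAbs := by
        have : (2:ℤ) ∣ p := ⟨t, by omega⟩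
        simpa using Int.natAbs_dvd_natAbs.mpr this
      have : 2 ∣ Nat.gcd p.natAbs 2 := Nat.dvd_gcd h2p dvd_rfl
      rw [hcop2] at this; omega
    obtain ⟨M, hM⟩ := hme
    have hm2M : (m : ℤ) = 2 * M := by push_cast; omega
    have key2 : ((m : ℤ) * (m + n)) * (p ^ 2 - 4 * (R : ℤ) ^ 2) = p ^ 3 := by
      push_cast at key
      have h2 : 2 * (((m : ℤ) * (m + n)) * (p ^ 2 - 4 * (R : ℤ) ^ 2)) = 2 * p ^ 3 := by
        linear_combination key
      exact mul_left_cancel₀ two_ne_zero h2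
    have h2p : (2:ℤ) ∣ p ^ 3 := by
      refine ⟨(M:ℤ) * ((m:ℤ)+n) * (p ^ 2 - 4 * (R:ℤ)^2), ?_⟩
      rw [← key2, hm2M]; ring
    have hpe : Even p := by
      obtain ⟨t, ht⟩ := h2p
      exact (Int.even_pow.mp (⟨t, by linarith⟩ : Even (p ^ 3))).1
    obtain ⟨a, ha⟩ := hpodd
    obtain ⟨t, ht⟩ := hpe
    omega
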